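/- Quantitative strict decrease of the partition function in the drift parameter (key lemma for the discrimination theorem): for every A > 0 there exists c > 0, depending only on a, V_R, V_F and A, such that for all real α, β with −A ≤ α ≤ β ≤ A one has Z(α) − Z(β) ≥ c (β − α). -/

import Mathlib

open MeasureTheory Real Set Filter

/-- The partition function with drift parameter `s`:
`Z(s) = ∫_{v ≤ V_F} ∫_{max(V_R,v)}^{V_F} exp((v'−v)(v'+v−2s)/(2a)) dv' dv`. -/
noncomputable def Z1 (a VR VF s : ℝ) : ℝ :=
  ∫ v in Set.Iic VF, ∫ v' in Set.Icc (max VR v) VF,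
    Real.exp ((v' - v) * (v' + v - 2 * s) / (2 * a))

lemma contgAux (a s v : ℝ) :
    Continuous fun x : ℝ => Real.exp ((x - v) * (x + v - 2 * s) / (2 * a)) :=
  Real.continuous_exp.comp
    (((continuous_id.sub continuous_const).mul
      ((continuous_id.add continuous_const).sub continuous_const)).div_const _)

lemma innerEqAux (a VR VF s v : ℝ) :
    (∫ v' in Icc (max VR v) VF, Real.exp ((v' - v) * (v' + v - 2 * s) / (2 * a)))
      = ∫ v' in Icc VR VF, (Ici v).indicator
          (fun v' => Real.exp ((v' - v) * (v' + v - 2 * s) / (2 * a))) v' := by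
  rw [setIntegral_indicator measurableSet_Ici]
  have hset : Icc VR VF ∩ Ici v = Icc (max VR v) VF := by
    ext x
    simp only [mem_inter_iff, mem_Icc, mem_Ici, max_le_iff]
    tauto
  rw [hset]

lemma intAux (a VR VF s : ℝ) (ha : 0 < a) (hV : VR < VF) :
    IntegrableOn (fun v => ∫ v' in Icc (max VR v) VF,
      Real.exp ((v' - v) * (v' + v - 2 * s) / (2 * a))) (Iic VF) := by
  set M : ℝ := max |VR| |VF| with hM
  set C1 : ℝ := (2 * M ^ 2 + 3 * s ^ 2) / (2 * a) with hC1
  -- dominating function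
  have hdom : Integrable (fun v : ℝ =>
      (Real.exp C1 * (VF - VR)) * Real.exp (-(1 / (4 * a)) * v ^ 2)) :=
    (integrable_exp_neg_mul_sq (by positivity)).const_mul _
  -- measurability
  have hcont : Continuous fun p : ℝ × ℝ =>
      Real.exp ((p.2 - p.1) * (p.2 + p.1 - 2 * s) / (2 * a)) :=
    Real.continuous_exp.comp
      (((continuous_snd.sub continuous_fst).mul
        ((continuous_snd.add continuous_fst).sub continuous_const)).div_const _)
  have hmeas : Measurable fun p : ℝ × ℝ => (Ici p.1).indicator
      (fun v' => Real.exp ((v' - p.1) * (v' + p.1 - 2 * s) / (2 * a))) p.2 := by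
    have heq : (fun p : ℝ × ℝ => (Ici p.1).indicator
        (fun v' => Real.exp ((v' - p.1) * (v' + p.1 - 2 * s) / (2 * a))) p.2)
        = fun p : ℝ × ℝ => if p.1 ≤ p.2 then
            Real.exp ((p.2 - p.1) * (p.2 + p.1 - 2 * s) / (2 * a)) else 0 := by
      funext p
      simp [Set.indicator_apply]
    rw [heq]
    exact Measurable.ite (measurableSet_le measurable_fst measurable_snd)
      hcont.measurable measurable_const
  have hsm : StronglyMeasurable fun v : ℝ => ∫ v' in Icc VR VF, (Ici v).indicator
      (fun v' => Real.exp ((v' - v) * (v' + v - 2 * s) / (2 * a))) v' :=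
    hmeas.stronglyMeasurable.integral_prod_right'
  -- pointwise bound
  have hbound : ∀ v : ℝ, ‖∫ v' in Icc VR VF, (Ici v).indicator
      (fun v' => Real.exp ((v' - v) * (v' + v - 2 * s) / (2 * a))) v'‖
      ≤ (Real.exp C1 * (VF - VR)) * Real.exp (-(1 / (4 * a)) * v ^ 2) := by
    intro v
    have h := norm_setIntegral_le_of_norm_le_const (μ := volume) (s := Icc VR VF)
      (f := fun v' => (Ici v).indicator
        (fun v' => Real.exp ((v' - v) * (v' + v - 2 * s) / (2 * a))) v')
      (C := Real.exp C1 * Real.exp (-(1 / (4 * a)) * v ^ 2))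
      (by rw [Real.volume_Icc]; exact ENNReal.ofReal_lt_top) ?_
    · refine le_trans h (le_of_eq ?_)
      rw [Real.volume_real_Icc_of_le (by linarith)]
      ring
    · intro x hx
      rw [Real.norm_eq_abs,
        abs_of_nonneg (Set.indicator_nonneg (fun _ _ => (Real.exp_pos _).le) _)]
      by_cases hvx : x ∈ Ici v
      · rw [Set.indicator_of_mem hvx]
        rw [← Real.exp_add]
        apply Real.exp_le_exp.2
        have hxM : |x| ≤ M := by
          rw [hM]
          refine abs_le.2 ⟨?_, ?_⟩
          · have h1 : -|VR| ≤ VR := neg_abs_le VR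
            have h2 : |VR| ≤ max |VR| |VF| := le_max_left _ _
            linarith [hx.1]
          · have h1 : VF ≤ |VF| := le_abs_self VF
            have h2 : |VF| ≤ max |VR| |VF| := le_max_right _ _
            linarith [hx.2]
        have hx2 : x ^ 2 ≤ M ^ 2 := by
          have := abs_le.1 hxM
          nlinarith
        have key : (x - v) * (x + v - 2 * s) ≤ (2 * M ^ 2 + 3 * s ^ 2) - v ^ 2 / 2 := by
          nlinarith [sq_nonneg (s + x), sq_nonneg (v - 2 * s)]
        calc (x - v) * (x + v - 2 * s) / (2 * a)
            ≤ ((2 * M ^ 2 + 3 * s ^ 2) - v ^ 2 / 2) / (2 * a) := by gcongr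
          _ = C1 + -(1 / (4 * a)) * v ^ 2 := by rw [hC1]; field_simp; ring
      · rw [Set.indicator_of_notMem hvx]
        positivity
  have key : IntegrableOn (fun v : ℝ => ∫ v' in Icc VR VF, (Ici v).indicator
      (fun v' => Real.exp ((v' - v) * (v' + v - 2 * s) / (2 * a))) v') (Iic VF) := by
    apply Integrable.integrableOn
    exact hdom.mono' hsm.aestronglyMeasurable (Filter.Eventually.of_forall hbound)
  have := key.congr_fun (fun v _ => (innerEqAux a VR VF s v).symm) measurableSet_Iic
  exact this

noncomputable def ZinnAux (a VR VF s v : ℝ) : ℝ :=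
  ∫ v' in Icc (max VR v) VF, Real.exp ((v' - v) * (v' + v - 2 * s) / (2 * a))

lemma ptAux (a A α β E0 δ : ℝ) (ha : 0 < a) (hA : 0 < A) (hδ : 0 < δ)
    (hαβ : α ≤ β) (hβA : β ≤ A)
    (v x : ℝ) (ht1 : δ ≤ x - v) (ht2 : x - v ≤ 3 * δ)
    (hE : E0 ≤ (x - v) * (x + v) / (2 * a)) :
    Real.exp E0 * Real.exp (-(3 * δ * A / a)) * (δ / a) * (β - α)
      ≤ Real.exp ((x - v) * (x + v - 2 * α) / (2 * a))
        - Real.exp ((x - v) * (x + v - 2 * β) / (2 * a)) := by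
  set t := (x - v) / a with htdef
  have ht0 : 0 < t := div_pos (lt_of_lt_of_le hδ ht1) ha
  have hsplit : ∀ s : ℝ, Real.exp ((x - v) * (x + v - 2 * s) / (2 * a))
      = Real.exp ((x - v) * (x + v) / (2 * a)) * Real.exp (-(t * s)) := by
    intro s; rw [← Real.exp_add]; congr 1; rw [htdef]; field_simp; ring
  rw [hsplit α, hsplit β]
  set E := (x - v) * (x + v) / (2 * a) with hEdef
  have h3 : Real.exp (-(t * β)) * (t * (β - α)) ≤ Real.exp (-(t * α)) - Real.exp (-(t * β)) := by
    have hmul : Real.exp (-(t * β)) * Real.exp (t * β - t * α) = Real.exp (-(t * α)) := by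
      rw [← Real.exp_add]; ring_nf
    nlinarith [mul_le_mul_of_nonneg_left (Real.add_one_le_exp (t * β - t * α))
      (Real.exp_pos (-(t * β))).le]
  have hβ1 : -(3 * δ * A / a) ≤ -(t * β) := by
    have h5 : t * β ≤ t * A := mul_le_mul_of_nonneg_left hβA ht0.le
    have h6 : t * A ≤ (3 * δ / a) * A := by
      have : t ≤ 3 * δ / a := by rw [htdef]; gcongr
      exact mul_le_mul_of_nonneg_right this hA.le
    have h7 : (3 * δ / a) * A = 3 * δ * A / a := by ring
    linarith
  have e1 : Real.exp E0 ≤ Real.exp E := Real.exp_le_exp.2 hE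
  have e2 : Real.exp (-(3 * δ * A / a)) ≤ Real.exp (-(t * β)) := Real.exp_le_exp.2 hβ1
  have e3 : δ / a ≤ t := by rw [htdef]; gcongr
  have hβα : (0:ℝ) ≤ β - α := by linarith
  have h4 : Real.exp E0 * Real.exp (-(3 * δ * A / a)) * (δ / a) * (β - α)
      ≤ Real.exp E * Real.exp (-(t * β)) * t * (β - α) := by gcongr
  nlinarith [mul_le_mul_of_nonneg_left h3 (Real.exp_pos E).le]

/-- Quantitative strict decrease of the partition function in the drift parameter
(key lemma for the discrimination Theorem 5.1). -/
theorem stmt14 (a VR VF : ℝ) (ha : 0 < a) (hV : VR < VF) :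
    ∀ A : ℝ, 0 < A → ∃ c > 0, ∀ α β : ℝ, -A ≤ α → α ≤ β → β ≤ A →
      c * (β - α) ≤ Z1 a VR VF α - Z1 a VR VF β := by
  intro A hA
  have hVF : 0 < VF - VR := by linarith
  set δ : ℝ := (VF - VR) / 3 with hδdef
  have hδ : 0 < δ := by positivity
  set v1 : ℝ := VR + δ with hv1def
  set v2 : ℝ := VR + 2 * δ with hv2def
  set E0 : ℝ := -(VR ^ 2 + v1 ^ 2) / (2 * a) with hE0def
  set c0 : ℝ := Real.exp E0 * Real.exp (-(3 * δ * A / a)) * (δ / a) with hc0def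
  have hc0 : 0 < c0 := by rw [hc0def]; positivity
  refine ⟨c0 * δ * δ, by positivity, ?_⟩
  intro α β hα hαβ hβA
  have hIα := intAux a VR VF α ha hV
  have hIβ := intAux a VR VF β ha hV
  have hIα' : IntegrableOn (fun v => ZinnAux a VR VF α v) (Iic VF) := hIα
  have hIβ' : IntegrableOn (fun v => ZinnAux a VR VF β v) (Iic VF) := hIβ
  -- pointwise monotonicity in s
  have hgmono : ∀ v x : ℝ, v ≤ x →
      Real.exp ((x - v) * (x + v - 2 * β) / (2 * a))
        ≤ Real.exp ((x - v) * (x + v - 2 * α) / (2 * a)) := by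
    intro v x hvx
    apply Real.exp_le_exp.2
    have key : (x - v) * (x + v - 2 * β) ≤ (x - v) * (x + v - 2 * α) := by nlinarith
    gcongr
  have hFmono : ∀ v : ℝ, ZinnAux a VR VF β v ≤ ZinnAux a VR VF α v := by
    intro v
    exact setIntegral_mono_on ((contgAux a β v).integrableOn_Icc)
      ((contgAux a α v).integrableOn_Icc) measurableSet_Icc
      (fun x hx => hgmono v x (le_trans (le_max_right VR v) hx.1))
  have hdiffnn : ∀ v : ℝ, 0 ≤ ZinnAux a VR VF α v - ZinnAux a VR VF β v :=
    fun v => sub_nonneg.2 (hFmono v)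
  have step1 : Z1 a VR VF α - Z1 a VR VF β
      = ∫ v in Iic VF, (ZinnAux a VR VF α v - ZinnAux a VR VF β v) :=
    (integral_sub hIα' hIβ').symm
  have hv1F : v1 ≤ VF := by rw [hv1def, hδdef]; linarith
  have step2 : ∫ v in Icc VR v1, (ZinnAux a VR VF α v - ZinnAux a VR VF β v)
      ≤ ∫ v in Iic VF, (ZinnAux a VR VF α v - ZinnAux a VR VF β v) :=
    setIntegral_mono_set (hIα'.sub hIβ') (Filter.Eventually.of_forall hdiffnn)
      (HasSubset.Subset.eventuallyLE (fun x hx => le_trans hx.2 hv1F))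
  have step34 : ∀ v ∈ Icc VR v1, c0 * (β - α) * δ
      ≤ ZinnAux a VR VF α v - ZinnAux a VR VF β v := by
    intro v hv
    have h1 : ZinnAux a VR VF α v - ZinnAux a VR VF β v
        = ∫ x in Icc v VF, (Real.exp ((x - v) * (x + v - 2 * α) / (2 * a))
            - Real.exp ((x - v) * (x + v - 2 * β) / (2 * a))) := by
      rw [ZinnAux, ZinnAux, max_eq_right hv.1,
        ← integral_sub ((contgAux a α v).integrableOn_Icc) ((contgAux a β v).integrableOn_Icc)]
    rw [h1]
    have hv2le : v ≤ v2 := by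
      have := hv.2
      rw [hv1def] at this
      rw [hv2def]; linarith
    have hdiffint : IntegrableOn (fun x => Real.exp ((x - v) * (x + v - 2 * α) / (2 * a))
        - Real.exp ((x - v) * (x + v - 2 * β) / (2 * a))) (Icc v VF) :=
      ((contgAux a α v).sub (contgAux a β v)).integrableOn_Icc
    have h2 : ∫ x in Icc v2 VF, (Real.exp ((x - v) * (x + v - 2 * α) / (2 * a))
          - Real.exp ((x - v) * (x + v - 2 * β) / (2 * a)))
        ≤ ∫ x in Icc v VF, (Real.exp ((x - v) * (x + v - 2 * α) / (2 * a))
          - Real.exp ((x - v) * (x + v - 2 * β) / (2 * a))) :=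
      setIntegral_mono_set hdiffint
        ((ae_restrict_iff' measurableSet_Icc).2 (Filter.Eventually.of_forall
          (fun x hx => sub_nonneg.2 (hgmono v x hx.1))))
        (HasSubset.Subset.eventuallyLE (Icc_subset_Icc hv2le le_rfl))
    have hvsq : v ^ 2 ≤ VR ^ 2 + v1 ^ 2 := by
      nlinarith [mul_nonneg (sub_nonneg.2 hv.1) (sub_nonneg.2 hv.2),
        sq_nonneg (VR + v1), sq_nonneg (VR - v1), sq_nonneg v, sq_nonneg VR, sq_nonneg v1]
    have hpt : ∀ x ∈ Icc v2 VF, c0 * (β - α)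
        ≤ Real.exp ((x - v) * (x + v - 2 * α) / (2 * a))
          - Real.exp ((x - v) * (x + v - 2 * β) / (2 * a)) := by
      intro x hx
      have hx1 : v2 ≤ x := hx.1
      have hx2 : x ≤ VF := hx.2
      have ht1 : δ ≤ x - v := by
        rw [hv2def] at hx1
        have := hv.2; rw [hv1def] at this
        linarith
      have ht2 : x - v ≤ 3 * δ := by
        have := hv.1
        rw [hδdef]; linarith
      have hE : E0 ≤ (x - v) * (x + v) / (2 * a) := by
        have hnum : -(VR ^ 2 + v1 ^ 2) ≤ (x - v) * (x + v) := by nlinarith [sq_nonneg x]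
        rw [hE0def]
        gcongr
      have := ptAux a A α β E0 δ ha hA hδ hαβ hβA v x ht1 ht2 hE
      rw [hc0def]
      exact this
    have h3 : c0 * (β - α) * δ ≤ ∫ x in Icc v2 VF, (Real.exp ((x - v) * (x + v - 2 * α) / (2 * a))
        - Real.exp ((x - v) * (x + v - 2 * β) / (2 * a))) := by
      have hconst : ∫ _x in Icc v2 VF, (c0 * (β - α)) = (VF - v2) * (c0 * (β - α)) := by
        rw [setIntegral_const,
          Real.volume_real_Icc_of_le (by rw [hv2def, hδdef]; linarith), smul_eq_mul]
      have hle : ∫ _x in Icc v2 VF, (c0 * (β - α)) ≤ ∫ x in Icc v2 VF,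
          (Real.exp ((x - v) * (x + v - 2 * α) / (2 * a))
            - Real.exp ((x - v) * (x + v - 2 * β) / (2 * a))) :=
        setIntegral_mono_on
          (integrableOn_const (by rw [Real.volume_Icc]; exact ENNReal.ofReal_ne_top))
          (hdiffint.mono_set (Icc_subset_Icc hv2le le_rfl)) measurableSet_Icc hpt
      have hv2F : VF - v2 = δ := by rw [hv2def, hδdef]; ring
      rw [hconst, hv2F] at hle
      linarith
    linarith
  have hconst2 : ∫ _v in Icc VR v1, (c0 * (β - α) * δ) = δ * (c0 * (β - α) * δ) := by
    rw [setIntegral_const,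
      Real.volume_real_Icc_of_le (by rw [hv1def]; linarith), smul_eq_mul]
    rw [hv1def]; ring_nf
  have hsubI : IntegrableOn (fun v => ZinnAux a VR VF α v - ZinnAux a VR VF β v) (Iic VF) :=
    hIα'.sub hIβ'
  have step5 : ∫ _v in Icc VR v1, (c0 * (β - α) * δ)
      ≤ ∫ v in Icc VR v1, (ZinnAux a VR VF α v - ZinnAux a VR VF β v) :=
    setIntegral_mono_on
      (integrableOn_const (by rw [Real.volume_Icc]; exact ENNReal.ofReal_ne_top))
      (hsubI.mono_set (fun x hx => le_trans hx.2 hv1F)) measurableSet_Icc step34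
  rw [step1]
  have : c0 * δ * δ * (β - α) = δ * (c0 * (β - α) * δ) := by ring
  rw [this, ← hconst2]
  exact le_trans step5 step2
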